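/- Let n ≥ 2 and let d : {1,…,n} → ℝ satisfy d(1) = 1 and 0 ≤ d(i) < 1 for every i ≠ 1. Let Ω := {z ∈ ℂⁿ | Im(z_n) > 0} and let F : Ω → ℂ be holomorphic. Suppose that all third-order partial derivatives of F vanish identically on Ω (∂_α∂_β∂_γ F ≡ 0 for all α,β,γ), and that F satisfies the weighted Euler equation Σ_{α=1}^n d(α)·z_α·∂_α F(z) = 2·F(z) for all z ∈ Ω. Then there exists a constant c ∈ ℂ such that F(z) = c·z₁² for all z ∈ Ω. -/

import Mathlib

open Filter Topology Metric Set MeasureTheory intervalIntegral Complex ContinuousLinearMap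


/-- The partial derivative `∂_α f` of a function `f : ℂⁿ → ℂ` in the direction of
the `α`-th coordinate. -/
noncomputable def pd {n : ℕ} (α : Fin n) (f : (Fin n → ℂ) → ℂ) :
    (Fin n → ℂ) → ℂ :=
  fun z => fderiv ℂ f z (Pi.single α 1)

lemma single_decomp {n : ℕ} (v : Fin n → ℂ) :
    v = ∑ γ : Fin n, v γ • (Pi.single γ (1 : ℂ) : Fin n → ℂ) := by
  funext j
  rw [Finset.sum_apply]
  simp [Pi.single_apply]

/-- Cauchy estimate: a bound on `fderiv` from a bound on the function on a larger ball. -/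
lemma fderiv_norm_le_aux {n : ℕ} {U : Set (Fin n → ℂ)} (hU : IsOpen U)
    {g : (Fin n → ℂ) → ℂ} (hg : DifferentiableOn ℂ g U)
    {z₀ : Fin n → ℂ} {r M : ℝ} (hr : 0 < r)
    (hsub : closedBall z₀ (3*r) ⊆ U)
    (hM : ∀ y ∈ closedBall z₀ (3*r), ‖g y‖ ≤ M)
    {y : Fin n → ℂ} (hy : y ∈ closedBall z₀ (2*r)) :
    ‖fderiv ℂ g y‖ ≤ M / r := by
  have hy' : y ∈ closedBall z₀ (3*r) := closedBall_subset_closedBall (by linarith) hy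
  have hM0 : 0 ≤ M := le_trans (norm_nonneg _) (hM y hy')
  refine ContinuousLinearMap.opNorm_le_bound _ (by positivity) fun v => ?_
  rcases eq_or_ne v 0 with rfl | hv
  · simp
  have hvn : 0 < ‖v‖ := norm_pos_iff.mpr hv
  set ρ : ℝ := r / ‖v‖ with hρdef
  have hρ : 0 < ρ := by positivity
  set sl : ℂ → ℂ := fun t => g (y + t • v) with hsl
  have hmem : ∀ t : ℂ, ‖t‖ ≤ ρ → (y + t • v) ∈ closedBall z₀ (3*r) := by
    intro t ht
    rw [mem_closedBall, dist_eq_norm] at *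
    have h1 : ‖y + t • v - z₀‖ ≤ ‖y - z₀‖ + ‖t • v‖ := by
      have : y + t • v - z₀ = (y - z₀) + t • v := by abel
      rw [this]; exact norm_add_le _ _
    have h2 : ‖t • v‖ ≤ r := by
      rw [norm_smul]
      calc ‖t‖ * ‖v‖ ≤ ρ * ‖v‖ := by gcongr
        _ = r := by rw [hρdef, div_mul_cancel₀ _ hvn.ne']
    have h3 : ‖y - z₀‖ ≤ 2*r := hy
    linarith
  have hdiff : DifferentiableOn ℂ sl (ball (0:ℂ) ρ) := by
    intro t ht
    have htU : (y + t • v) ∈ U := hsub (hmem t (mem_ball_zero_iff.mp ht).le)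
    exact ((hg.differentiableAt (hU.mem_nhds htU)).comp t
      ((differentiableAt_id.smul_const v).const_add y)).differentiableWithinAt
  have hcont : ContinuousOn sl (closedBall (0:ℂ) ρ) := by
    refine (hg.continuousOn.comp ((continuous_const.add (continuous_id.smul
      continuous_const)).continuousOn) ?_)
    intro t ht
    exact hsub (hmem t (mem_closedBall_zero_iff.mp ht))
  have hdc : DiffContOnCl ℂ sl (ball (0:ℂ) ρ) :=
    ⟨hdiff, by rwa [closure_ball (0:ℂ) hρ.ne']⟩
  have hC : ∀ t ∈ sphere (0:ℂ) ρ, ‖sl t‖ ≤ M := by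
    intro t ht
    have : ‖t‖ = ρ := mem_sphere_zero_iff_norm.mp ht
    exact hM _ (hmem t this.le)
  have hbd := Complex.norm_deriv_le_of_forall_mem_sphere_norm_le hρ hdc hC
  have hder : HasDerivAt sl (fderiv ℂ g y v) 0 := by
    have hyU : y ∈ U := hsub hy'
    have h1 : HasFDerivAt g (fderiv ℂ g y) (y + (0:ℂ) • v) := by
      simpa using (hg.differentiableAt (hU.mem_nhds hyU)).hasFDerivAt
    have h2 : HasDerivAt (fun t : ℂ => y + t • v) ((1:ℂ) • v) 0 :=
      ((hasDerivAt_id (0:ℂ)).smul_const v).const_add y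
    simpa [Function.comp_def] using h1.comp_hasDerivAt 0 h2
  rw [← hder.deriv]
  calc ‖deriv sl 0‖ ≤ M / ρ := hbd
    _ = M / r * ‖v‖ := by rw [hρdef, div_div_eq_mul_div, mul_div_right_comm]

/-- Key regularity lemma: the partial derivative of a holomorphic function on an open
set `U ⊆ ℂⁿ` is again (Fréchet) differentiable on `U`. -/
lemma pd_differentiableOn {n : ℕ} {U : Set (Fin n → ℂ)} (hU : IsOpen U)
    {g : (Fin n → ℂ) → ℂ} (hg : DifferentiableOn ℂ g U) (γ : Fin n) :
    DifferentiableOn ℂ (pd γ g) U := by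
  intro z₀ hz₀
  suffices h : DifferentiableAt ℂ (pd γ g) z₀ from h.differentiableWithinAt
  obtain ⟨ε, hε, hball⟩ := Metric.isOpen_iff.mp hU z₀ hz₀
  set r : ℝ := ε / 4 with hrdef
  have hr : 0 < r := by positivity
  have hsub : closedBall z₀ (3*r) ⊆ U := by
    refine Subset.trans ?_ hball
    intro x hx
    rw [mem_closedBall] at hx
    rw [mem_ball]
    calc dist x z₀ ≤ 3*r := hx
      _ < ε := by rw [hrdef]; linarith
  obtain ⟨M, hM⟩ := (isCompact_closedBall z₀ (3*r)).exists_bound_of_continuousOn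
    (hg.continuousOn.mono hsub)
  set e : Fin n → ℂ := Pi.single γ 1 with hedef
  have hnorme : ‖e‖ = 1 := by rw [hedef, Pi.norm_single]; exact norm_one
  set cst : ℝ → ℂ := fun θ =>
    (2 * (Real.pi : ℂ) * Complex.I)⁻¹ * (deriv (circleMap 0 r) θ * ((circleMap 0 r θ) ^ 2)⁻¹)
    with hcstdef
  set Φ : (Fin n → ℂ) → ℝ → ℂ := fun x θ => cst θ * g (x + circleMap 0 r θ • e) with hΦdef
  set Φ' : (Fin n → ℂ) → ℝ → (Fin n → ℂ) →L[ℂ] ℂ :=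
    fun x θ => cst θ • fderiv ℂ g (x + circleMap 0 r θ • e) with hΦ'def
  have hmem2 : ∀ x ∈ ball z₀ r, ∀ θ : ℝ, (x + circleMap 0 r θ • e) ∈ closedBall z₀ (2*r) := by
    intro x hx θ
    rw [mem_closedBall, dist_eq_norm]
    have h1 : x + circleMap 0 r θ • e - z₀ = (x - z₀) + circleMap 0 r θ • e := by abel
    rw [h1]
    have h2 : ‖circleMap 0 r θ • e‖ = r := by
      rw [norm_smul, hnorme, mul_one]
      simpa using norm_circleMap_zero r θ |>.trans (abs_of_pos hr)
    calc ‖(x - z₀) + circleMap 0 r θ • e‖ ≤ ‖x - z₀‖ + ‖circleMap 0 r θ • e‖ := norm_add_le _ _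
      _ ≤ r + r := by
          have := mem_ball_iff_norm.mp hx
          rw [h2]; linarith
      _ = 2*r := by ring
  have hmemU : ∀ x ∈ ball z₀ r, ∀ θ : ℝ, (x + circleMap 0 r θ • e) ∈ U := fun x hx θ =>
    hsub (closedBall_subset_closedBall (by linarith) (hmem2 x hx θ))
  -- the integral representation of pd γ g on the ball
  have hrep : ∀ x ∈ ball z₀ r, pd γ g x = ∫ θ in (0:ℝ)..(2*Real.pi), Φ x θ := by
    intro x hx
    have hxz : ‖x - z₀‖ < r := mem_ball_iff_norm.mp hx
    have hsl : DifferentiableOn ℂ (fun t : ℂ => g (x + t • e)) (ball (0:ℂ) (2*r)) := by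
      intro t ht
      have htm : (x + t • e) ∈ U := by
        apply hsub
        rw [mem_closedBall, dist_eq_norm]
        have h1 : x + t • e - z₀ = (x - z₀) + t • e := by abel
        rw [h1]
        have h2 : ‖t • e‖ < 2*r := by
          rw [norm_smul, hnorme, mul_one]; exact mem_ball_zero_iff.mp ht
        calc ‖(x - z₀) + t • e‖ ≤ ‖x - z₀‖ + ‖t • e‖ := norm_add_le _ _
          _ ≤ 3*r := by linarith
      exact ((hg.differentiableAt (hU.mem_nhds htm)).comp t
        ((differentiableAt_id.smul_const e).const_add x)).differentiableWithinAt
    have hCIF := Complex.two_pi_I_inv_smul_circleIntegral_sub_sq_inv_smul_of_differentiable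
      isOpen_ball (closedBall_subset_ball (by linarith) : closedBall (0:ℂ) r ⊆ ball 0 (2*r))
      hsl (mem_ball_self hr)
    have hder : HasDerivAt (fun t : ℂ => g (x + t • e)) (pd γ g x) 0 := by
      have hxU : x ∈ U := hball (ball_subset_ball (by rw [hrdef]; linarith) hx)
      have h1 : HasFDerivAt g (fderiv ℂ g x) (x + (0:ℂ) • e) := by
        simpa using (hg.differentiableAt (hU.mem_nhds hxU)).hasFDerivAt
      have h2 : HasDerivAt (fun t : ℂ => x + t • e) ((1:ℂ) • e) 0 :=
        ((hasDerivAt_id (0:ℂ)).smul_const e).const_add x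
      simpa [Function.comp_def, pd, hedef] using h1.comp_hasDerivAt 0 h2
    rw [← hder.deriv, ← hCIF]
    simp only [circleIntegral]
    rw [← intervalIntegral.integral_smul]
    apply intervalIntegral.integral_congr
    intro θ _
    simp only [hΦdef, hcstdef, sub_zero, smul_eq_mul]
    ring
  -- continuity in θ
  have hcirc_ne : ∀ θ : ℝ, circleMap 0 r θ ≠ 0 := fun θ => circleMap_ne_center hr.ne'
  have hcst_cont : Continuous cst := by
    have h1 : Continuous fun θ : ℝ => deriv (circleMap 0 r) θ := by
      simp only [deriv_circleMap]
      exact (continuous_circleMap 0 r).mul continuous_const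
    have h2 : Continuous fun θ : ℝ => ((circleMap 0 r θ) ^ 2)⁻¹ :=
      ((continuous_circleMap 0 r).pow 2).inv₀ fun θ => pow_ne_zero 2 (hcirc_ne θ)
    rw [hcstdef]
    exact continuous_const.mul (h1.mul h2)
  have hcontθ : ∀ x ∈ ball z₀ r, Continuous (Φ x) := by
    intro x hx
    apply hcst_cont.mul
    refine hg.continuousOn.comp_continuous ?_ (fun θ => hmemU x hx θ)
    exact continuous_const.add ((continuous_circleMap 0 r).smul continuous_const)
  have hF_meas : ∀ᶠ x in 𝓝 z₀, AEStronglyMeasurable (Φ x)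
      (volume.restrict (Set.uIoc (0:ℝ) (2*Real.pi))) := by
    filter_upwards [ball_mem_nhds z₀ hr] with x hx
    exact (hcontθ x hx).aestronglyMeasurable
  have hF_int : IntervalIntegrable (Φ z₀) volume 0 (2*Real.pi) :=
    (hcontθ z₀ (mem_ball_self hr)).intervalIntegrable _ _
  have hF'_meas : AEStronglyMeasurable (Φ' z₀) (volume.restrict (Set.uIoc (0:ℝ) (2*Real.pi))) := by
    apply AEStronglyMeasurable.smul hcst_cont.aestronglyMeasurable
    apply Measurable.aestronglyMeasurable
    exact (measurable_fderiv ℂ g).comp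
      (continuous_const.add ((continuous_circleMap 0 r).smul continuous_const)).measurable
  set C : ℝ := (2 * Real.pi * r)⁻¹ * (M / r) with hCdef
  have hcstnorm : ∀ θ : ℝ, ‖cst θ‖ = (2 * Real.pi * r)⁻¹ := by
    intro θ
    rw [hcstdef]
    rw [show ((fun θ : ℝ => (2 * (Real.pi : ℂ) * Complex.I)⁻¹ *
      (deriv (circleMap 0 r) θ * ((circleMap 0 r θ) ^ 2)⁻¹)) θ) = (2 * (Real.pi : ℂ) * Complex.I)⁻¹ *
      (deriv (circleMap 0 r) θ * ((circleMap 0 r θ) ^ 2)⁻¹) from rfl]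
    simp only [norm_mul, norm_inv, norm_pow, deriv_circleMap, Complex.norm_I, Complex.norm_two,
      Complex.norm_real, Real.norm_eq_abs, norm_circleMap_zero]
    rw [abs_of_pos Real.pi_pos, abs_of_pos hr]
    field_simp
  have h_bound : ∀ᵐ θ ∂(volume : Measure ℝ), θ ∈ Set.uIoc (0:ℝ) (2*Real.pi) →
      ∀ x ∈ ball z₀ r, ‖Φ' x θ‖ ≤ C := by
    refine Eventually.of_forall fun θ _ x hx => ?_
    have hns := norm_smul (cst θ) (fderiv ℂ g (x + circleMap 0 r θ • e))
    rw [show Φ' x θ = cst θ • fderiv ℂ g (x + circleMap 0 r θ • e) from rfl, hns,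
      hcstnorm θ, hCdef]
    have hb := fderiv_norm_le_aux hU hg hr hsub hM (hmem2 x hx θ)
    have hpos : (0:ℝ) ≤ (2 * Real.pi * r)⁻¹ := by positivity
    exact mul_le_mul_of_nonneg_left hb hpos
  have h_diff : ∀ᵐ θ ∂(volume : Measure ℝ), θ ∈ Set.uIoc (0:ℝ) (2*Real.pi) →
      ∀ x ∈ ball z₀ r, HasFDerivAt (fun x => Φ x θ) (Φ' x θ) x := by
    refine Eventually.of_forall fun θ _ x hx => ?_
    have hpU : (x + circleMap 0 r θ • e) ∈ U := hmemU x hx θ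
    have hgp : HasFDerivAt g (fderiv ℂ g (x + circleMap 0 r θ • e)) (x + circleMap 0 r θ • e) :=
      (hg.differentiableAt (hU.mem_nhds hpU)).hasFDerivAt
    have h1 : HasFDerivAt (fun x : Fin n → ℂ => g (x + circleMap 0 r θ • e))
        (fderiv ℂ g (x + circleMap 0 r θ • e)) x := by
      have := hgp.comp x ((hasFDerivAt_id x).add_const (circleMap 0 r θ • e))
      simpa [Function.comp_def] using this
    exact h1.const_mul (cst θ)
  have hPar := intervalIntegral.hasFDerivAt_integral_of_dominated_of_fderiv_le (ball_mem_nhds z₀ hr)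
    hF_meas hF_int hF'_meas h_bound (intervalIntegrable_const) h_diff
  have heq : pd γ g =ᶠ[𝓝 z₀] fun x => ∫ θ in (0:ℝ)..(2*Real.pi), Φ x θ := by
    filter_upwards [ball_mem_nhds z₀ hr] with x hx using hrep x hx
  exact (hPar.congr_of_eventuallyEq heq).differentiableAt

/-- Differentiating a weighted Euler-type identity once, in the direction of the `γ`-th
coordinate. -/
lemma euler_step {n : ℕ} (d : Fin n → ℝ) (z : Fin n → ℂ)
    (φ : Fin n → (Fin n → ℂ) → ℂ) (Φ : Fin n → (Fin n → ℂ) →L[ℂ] ℂ)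
    (hφ : ∀ α, HasFDerivAt (φ α) (Φ α) z)
    (ψ : (Fin n → ℂ) → ℂ) (Ψ : (Fin n → ℂ) →L[ℂ] ℂ) (hψ : HasFDerivAt ψ Ψ z)
    (heq : (fun w => ∑ α, (d α : ℂ) * w α * φ α w) =ᶠ[𝓝 z] ψ) (γ : Fin n) :
    (∑ α, (d α : ℂ) * z α * Φ α (Pi.single γ 1)) + (d γ : ℂ) * φ γ z
      = Ψ (Pi.single γ 1) := by
  classical
  set D : Fin n → (Fin n → ℂ) →L[ℂ] ℂ := fun α =>
    ((d α : ℂ) * z α) • Φ α + φ α z • ((d α : ℂ) • ContinuousLinearMap.proj α) with hD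
  have hterm : ∀ α : Fin n, HasFDerivAt (fun w : Fin n → ℂ => (d α : ℂ) * w α * φ α w) (D α) z :=
    fun α => ((hasFDerivAt_apply α z).const_mul ((d α : ℂ))).mul (hφ α)
  have hsum : HasFDerivAt (fun w : Fin n → ℂ => ∑ α, (d α : ℂ) * w α * φ α w) (∑ α, D α) z :=
    HasFDerivAt.fun_sum fun α _ => hterm α
  have hfd : (∑ α, D α) = Ψ := by
    rw [← hsum.fderiv, heq.fderiv_eq, hψ.fderiv]
  have happ := congrArg (fun T : (Fin n → ℂ) →L[ℂ] ℂ => T (Pi.single γ 1)) hfd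
  simp only [ContinuousLinearMap.coe_sum', Finset.sum_apply, ContinuousLinearMap.add_apply,
    ContinuousLinearMap.smul_apply, ContinuousLinearMap.proj_apply, smul_eq_mul, hD] at happ
  rw [Finset.sum_add_distrib] at happ
  have h3 : (∑ α, φ α z * ((d α : ℂ) * ((Pi.single γ 1 : Fin n → ℂ) α)))
      = (d γ : ℂ) * φ γ z := by
    rw [Finset.sum_eq_single γ]
    · rw [Pi.single_eq_same]; ring
    · intro b _ hb
      rw [Pi.single_eq_of_ne hb]; ring
    · intro h; exact absurd (Finset.mem_univ γ) h
  rw [h3] at happ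
  exact happ

/-- Let `d(1) = 1` and `0 ≤ d(i) < 1` for `i ≠ 1`, and let `F` be holomorphic on
`Ω = {z ∈ ℂⁿ | Im z_n > 0}`.  If all third-order partial derivatives of `F` vanish
on `Ω` and `F` satisfies the weighted Euler equation `Σ_α d(α)·z_α·∂_α F = 2F`,
then `F = c·z₁²` for some constant `c ∈ ℂ`. -/
theorem potential_unique_of_vanishing_third_derivatives
    (n : ℕ) (hn : 2 ≤ n) (d : Fin n → ℝ)
    (hd1 : d ⟨0, by omega⟩ = 1)
    (hd : ∀ i : Fin n, i ≠ ⟨0, by omega⟩ → 0 ≤ d i ∧ d i < 1)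
    (F : (Fin n → ℂ) → ℂ)
    (hF : DifferentiableOn ℂ F {z : Fin n → ℂ | 0 < (z ⟨n - 1, by omega⟩).im})
    (h3 : ∀ α β γ : Fin n, ∀ z ∈ {z : Fin n → ℂ | 0 < (z ⟨n - 1, by omega⟩).im},
      pd α (pd β (pd γ F)) z = 0)
    (hE : ∀ z ∈ {z : Fin n → ℂ | 0 < (z ⟨n - 1, by omega⟩).im},
      ∑ α : Fin n, (d α : ℂ) * z α * pd α F z = 2 * F z) :
    ∃ c : ℂ, ∀ z ∈ {z : Fin n → ℂ | 0 < (z ⟨n - 1, by omega⟩).im},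
      F z = c * (z ⟨0, by omega⟩) ^ 2 := by
  classical
  have hn0 : 0 < n := by omega
  set i0 : Fin n := ⟨0, by omega⟩ with hi0def
  set jn : Fin n := ⟨n - 1, by omega⟩ with hjndef
  set Ω : Set (Fin n → ℂ) := {z : Fin n → ℂ | 0 < (z jn).im} with hΩdef
  have hF' : DifferentiableOn ℂ F Ω := hF
  have h3' : ∀ α β γ : Fin n, ∀ z ∈ Ω, pd α (pd β (pd γ F)) z = 0 := h3
  have hE' : ∀ z ∈ Ω, ∑ α : Fin n, (d α : ℂ) * z α * pd α F z = 2 * F z := hE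
  have hd1' : d i0 = 1 := hd1
  have hΩo : IsOpen Ω := by
    rw [hΩdef]
    exact isOpen_lt continuous_const (Complex.continuous_im.comp (continuous_apply jn))
  have hΩc : Convex ℝ Ω := by
    intro x hx y hy a b ha hb hab
    have hx' : 0 < (x jn).im := hx
    have hy' : 0 < (y jn).im := hy
    show 0 < (((a • x + b • y) : Fin n → ℂ) jn).im
    have : ((a • x + b • y) : Fin n → ℂ) jn = a • (x jn) + b • (y jn) := rfl
    rw [this]
    rw [Complex.add_im, Complex.smul_im, Complex.smul_im]
    rcases eq_or_lt_of_le ha with h0 | ha'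
    · rw [← h0] at hab ⊢
      simp only [zero_smul, zero_add, smul_eq_mul]
      have hb1 : b = 1 := by linarith
      rw [hb1]
      simpa using hy'
    · simp only [smul_eq_mul]
      nlinarith [mul_pos ha' hx', mul_nonneg hb hy'.le]
  -- regularity
  have hGdOn : ∀ γ : Fin n, DifferentiableOn ℂ (pd γ F) Ω := fun γ =>
    pd_differentiableOn hΩo hF' γ
  have hHdOn : ∀ β γ : Fin n, DifferentiableOn ℂ (pd β (pd γ F)) Ω := fun β γ =>
    pd_differentiableOn hΩo (hGdOn γ) β
  have hf''d : ∀ z ∈ Ω, DifferentiableAt ℂ (fderiv ℂ F) z := by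
    intro z hz
    have hrepr : (fderiv ℂ F) = fun w => ∑ γ : Fin n,
        (ContinuousLinearMap.smulRightL ℂ (Fin n → ℂ) ℂ (ContinuousLinearMap.proj γ))
          (pd γ F w) := by
      funext w
      refine ContinuousLinearMap.ext fun v => ?_
      rw [ContinuousLinearMap.sum_apply]
      have hterm : ∀ γ : Fin n, (ContinuousLinearMap.smulRightL ℂ (Fin n → ℂ) ℂ
          (ContinuousLinearMap.proj γ) (pd γ F w)) v = v γ • pd γ F w := fun γ => rfl
      rw [Finset.sum_congr rfl fun γ _ => hterm γ]
      conv_lhs => rw [single_decomp v]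
      rw [_root_.map_sum]
      refine Finset.sum_congr rfl fun i _ => ?_
      rw [_root_.map_smul]
      rfl
    rw [hrepr]
    refine DifferentiableAt.fun_sum fun γ _ => ?_
    exact (ContinuousLinearMap.smulRightL ℂ (Fin n → ℂ) ℂ
      (ContinuousLinearMap.proj γ)).differentiable.differentiableAt.comp z
      ((hGdOn γ z hz).differentiableAt (hΩo.mem_nhds hz))
  have hGfd : ∀ z ∈ Ω, ∀ γ : Fin n,
      HasFDerivAt (pd γ F) ((fderiv ℂ (fderiv ℂ F) z).flip (Pi.single γ 1)) z := by
    intro z hz γ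
    have h := ((hf''d z hz).hasFDerivAt).clm_apply
      (hasFDerivAt_const (Pi.single γ 1 : Fin n → ℂ) z)
    simp at h
    exact h
  have pdpd : ∀ z ∈ Ω, ∀ β γ : Fin n,
      pd β (pd γ F) z = fderiv ℂ (fderiv ℂ F) z (Pi.single β 1) (Pi.single γ 1) := by
    intro z hz β γ
    have h : fderiv ℂ (pd γ F) z = (fderiv ℂ (fderiv ℂ F) z).flip (Pi.single γ 1) :=
      (hGfd z hz γ).fderiv
    show fderiv ℂ (pd γ F) z (Pi.single β 1) = _
    rw [h]
    rfl
  have hsymm : ∀ z ∈ Ω, ∀ β γ : Fin n, pd β (pd γ F) z = pd γ (pd β F) z := by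
    intro z hz β γ
    rw [pdpd z hz β γ, pdpd z hz γ β]
    exact second_derivative_symmetric_of_eventually (f := F) (f' := fderiv ℂ F)
      (by filter_upwards [hΩo.mem_nhds hz] with y hy using
        (hF'.differentiableAt (hΩo.mem_nhds hy)).hasFDerivAt)
      ((hf''d z hz).hasFDerivAt) _ _
  -- first differentiation of the Euler identity
  have E1 : ∀ z ∈ Ω, ∀ β : Fin n,
      ∑ α, (d α : ℂ) * z α * pd β (pd α F) z = (2 - (d β : ℂ)) * pd β F z := by
    intro z hz β
    have h := euler_step d z (fun α => pd α F)
      (fun α => (fderiv ℂ (fderiv ℂ F) z).flip (Pi.single α 1))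
      (fun α => hGfd z hz α)
      (fun w => 2 * F w) ((2:ℂ) • fderiv ℂ F z)
      ((hF'.differentiableAt (hΩo.mem_nhds hz)).hasFDerivAt.const_mul 2)
      (by filter_upwards [hΩo.mem_nhds hz] with w hw using hE' w hw) β
    have hL : ∀ α : Fin n, ((fderiv ℂ (fderiv ℂ F) z).flip (Pi.single α 1)) (Pi.single β 1)
        = pd β (pd α F) z := by
      intro α
      rw [pdpd z hz β α]
      rfl
    rw [Finset.sum_congr rfl (fun α _ => by rw [hL α])] at h
    have hR : ((2:ℂ) • fderiv ℂ F z) (Pi.single β 1) = 2 * pd β F z := by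
      rw [ContinuousLinearMap.smul_apply, smul_eq_mul]
      rfl
    rw [hR] at h
    linear_combination h
  -- second differentiation of the Euler identity
  have E2 : ∀ z ∈ Ω, ∀ β γ : Fin n,
      ((d β : ℂ) + (d γ : ℂ) - 2) * pd β (pd γ F) z = 0 := by
    intro z hz β γ
    have h := euler_step d z (fun α => pd β (pd α F))
      (fun α => fderiv ℂ (pd β (pd α F)) z)
      (fun α => ((hHdOn β α z hz).differentiableAt (hΩo.mem_nhds hz)).hasFDerivAt)
      (fun w => (2 - (d β : ℂ)) * pd β F w)
      ((2 - (d β : ℂ)) • ((fderiv ℂ (fderiv ℂ F) z).flip (Pi.single β 1)))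
      ((hGfd z hz β).const_mul (2 - (d β : ℂ)))
      (by filter_upwards [hΩo.mem_nhds hz] with w hw using E1 w hw β) γ
    have hz3 : ∀ α : Fin n, fderiv ℂ (pd β (pd α F)) z (Pi.single γ 1) = 0 :=
      fun α => h3' γ β α z hz
    rw [Finset.sum_eq_zero (fun α _ => by rw [hz3 α, mul_zero])] at h
    rw [zero_add] at h
    have hflip : ((fderiv ℂ (fderiv ℂ F) z).flip (Pi.single β 1)) (Pi.single γ 1)
        = pd β (pd γ F) z := by
      have h1 : ((fderiv ℂ (fderiv ℂ F) z).flip (Pi.single β 1)) (Pi.single γ 1)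
          = fderiv ℂ (fderiv ℂ F) z (Pi.single γ 1) (Pi.single β 1) := rfl
      rw [h1, ← pdpd z hz γ β, ← hsymm z hz β γ]
    rw [ContinuousLinearMap.smul_apply, hflip, smul_eq_mul] at h
    linear_combination h
  -- vanishing of second derivatives with at least one index different from i0
  have hvan : ∀ z ∈ Ω, ∀ β γ : Fin n, β ≠ i0 → pd β (pd γ F) z = 0 := by
    intro z hz β γ hβ
    have h1 : d β < 1 := (hd β hβ).2
    have h2 : d γ ≤ 1 := by
      by_cases hγ : γ = i0
      · rw [hγ, hd1']
      · exact (hd γ hγ).2.le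
    have hcoef : (d β : ℂ) + (d γ : ℂ) - 2 ≠ 0 := by
      have : ((d β + d γ - 2 : ℝ) : ℂ) ≠ 0 :=
        Complex.ofReal_ne_zero.mpr (by linarith)
      simpa [Complex.ofReal_sub, Complex.ofReal_add] using this
    exact (mul_eq_zero.mp (E2 z hz β γ)).resolve_left hcoef
  have hvan2 : ∀ z ∈ Ω, ∀ β γ : Fin n, γ ≠ i0 → pd β (pd γ F) z = 0 := by
    intro z hz β γ hγ
    rw [hsymm z hz β γ]
    exact hvan z hz γ β hγ
  -- vanishing of first derivatives in the non-i0 directions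
  have hfirst : ∀ z ∈ Ω, ∀ β : Fin n, β ≠ i0 → pd β F z = 0 := by
    intro z hz β hβ
    have h := E1 z hz β
    rw [Finset.sum_eq_zero (fun α _ => by rw [hvan z hz β α hβ, mul_zero])] at h
    have hcoef : (2 - (d β : ℂ)) ≠ 0 := by
      have h1 : d β < 1 := (hd β hβ).2
      have : ((2 - d β : ℝ) : ℂ) ≠ 0 := Complex.ofReal_ne_zero.mpr (by linarith)
      simpa [Complex.ofReal_sub] using this
    exact ((mul_eq_zero.mp h.symm).resolve_left hcoef)
  -- the first derivative in the i0 direction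
  have h0F : ∀ z ∈ Ω, pd i0 F z = z i0 * pd i0 (pd i0 F) z := by
    intro z hz
    have h := E1 z hz i0
    rw [Finset.sum_eq_single i0
      (fun b _ hb => by rw [hvan2 z hz i0 b hb, mul_zero])
      (fun h => absurd (Finset.mem_univ i0) h)] at h
    rw [hd1'] at h
    push_cast at h
    linear_combination -h
  -- the second derivative pd i0 (pd i0 F) is constant on Ω
  set z₀ : Fin n → ℂ := fun _ => Complex.I with hz₀def
  have hz₀ : z₀ ∈ Ω := by
    show 0 < (z₀ jn).im
    rw [hz₀def]
    simp [Complex.I_im]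
  have hfw : ∀ x ∈ Ω, ‖fderivWithin ℂ (pd i0 (pd i0 F)) Ω x‖ ≤ 0 := by
    intro x hx
    rw [fderivWithin_of_isOpen hΩo hx]
    have hzero : fderiv ℂ (pd i0 (pd i0 F)) x = 0 := by
      refine ContinuousLinearMap.ext fun v => ?_
      rw [ContinuousLinearMap.zero_apply]
      conv_lhs => rw [single_decomp v]
      rw [_root_.map_sum]
      refine Finset.sum_eq_zero fun i _ => ?_
      rw [_root_.map_smul, show fderiv ℂ (pd i0 (pd i0 F)) x (Pi.single i 1) = 0 from
        h3' i i0 i0 x hx, smul_zero]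
    rw [hzero]
    simp
  have hconst : ∀ z ∈ Ω, pd i0 (pd i0 F) z = pd i0 (pd i0 F) z₀ := by
    intro z hz
    have h := hΩc.norm_image_sub_le_of_norm_fderivWithin_le (hHdOn i0 i0) hfw hz₀ hz
    rw [zero_mul] at h
    have := norm_le_zero_iff.mp h
    rw [sub_eq_zero] at this
    exact this
  -- conclusion
  refine ⟨pd i0 (pd i0 F) z₀ / 2, ?_⟩
  intro z hz
  have hz' : z ∈ Ω := hz
  have hEz := hE' z hz'
  rw [Finset.sum_eq_single i0
    (fun b _ hb => by rw [hfirst z hz' b hb, mul_zero])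
    (fun h => absurd (Finset.mem_univ i0) h)] at hEz
  rw [hd1', h0F z hz', hconst z hz'] at hEz
  push_cast at hEz
  show F z = pd i0 (pd i0 F) z₀ / 2 * (z i0) ^ 2
  linear_combination -hEz / 2
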